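/- arXiv:1607.02098 — 4 statements merged into one kernel-verified Lean document; each statement's English description precedes it below -/
import Mathlib

section
/- Let s = a + ib be a complex number with a = Re(s) > 0, let m > 0, and let A be a complex number with (1-s)A + m ≠ 0. Then |((1+s)A - m)/((1-s)A + m)| < 1 if and only if |A - m/(2a)| < m/(2a). -/
theorem stmt_2 (s : ℂ) (ha : 0 < s.re) (m : ℝ) (hm : 0 < m) (A : ℂ)
    (hden : (1 - s) * A + m ≠ 0) :
    ‖((1 + s) * A - m) / ((1 - s) * A + m)‖ < 1 ↔
      ‖A - ((m / (2 * s.re) : ℝ) : ℂ)‖ < m / (2 * s.re) := by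
  have hr : 0 < m / (2 * s.re) := by positivity
  rw [norm_div, div_lt_one (norm_pos_iff.mpr hden)]
  rw [show ‖((1 + s) * A - m)‖ < ‖(1 - s) * A + m‖ ↔
      Complex.normSq ((1 + s) * A - m) < Complex.normSq ((1 - s) * A + m) by
    rw [Complex.norm_def, Complex.norm_def,
      Real.sqrt_lt_sqrt_iff (Complex.normSq_nonneg _)]]
  rw [show ‖A - ((m / (2 * s.re) : ℝ) : ℂ)‖ < m / (2 * s.re) ↔
      Complex.normSq (A - ((m / (2 * s.re) : ℝ) : ℂ)) < (m / (2 * s.re)) ^ 2 by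
    rw [Complex.norm_def]; exact Real.sqrt_lt' hr]
  simp only [Complex.normSq_apply, Complex.add_re, Complex.add_im, Complex.sub_re,
    Complex.sub_im, Complex.mul_re, Complex.mul_im, Complex.one_re, Complex.one_im,
    Complex.ofReal_re, Complex.ofReal_im]
  set a := s.re with haa
  set b := s.im
  set x := A.re
  set y := A.im
  have h2a : (2 * a : ℝ) ≠ 0 := by positivity
  generalize hR : m / (2 * a) = r at *
  have hm' : m = 2 * a * r := by rw [← hR]; field_simp
  subst hm'
  constructor <;> intro h <;> nlinarith [sq_nonneg b, mul_pos ha hr]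
end

section
/- Let s = a + ib be a complex number with a = Re(s) > 0, m > 0, 0 ≤ l < 1, and let A ∈ ℂ with (1-s)A + m ≠ 0. Then |((1+s)A - m)/((1-s)A + m)| ≤ l if and only if |A - m((1+l²) + a(1-l²) - ib(1-l²)) / (2a(1+l²) + (1-l²)(1+|s|²))| ≤ 2lm / (2a(1+l²) + (1-l²)(1+|s|²)). -/
set_option maxHeartbeats 1000000

theorem stmt_3 (s : ℂ) (ha : 0 < s.re) (m l : ℝ) (hm : 0 < m) (hl0 : 0 ≤ l) (hl1 : l < 1)
    (A : ℂ) (hden : (1 - s) * A + m ≠ 0) :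
    ‖((1 + s) * A - m) / ((1 - s) * A + m)‖ ≤ l ↔
      ‖A -
          (m : ℂ) * (((1 + l ^ 2) + s.re * (1 - l ^ 2) : ℝ) - Complex.I * (s.im * (1 - l ^ 2))) /
            ((2 * s.re * (1 + l ^ 2) + (1 - l ^ 2) * (1 + ‖s‖ ^ 2) : ℝ) : ℂ)‖ ≤
        2 * l * m / (2 * s.re * (1 + l ^ 2) + (1 - l ^ 2) * (1 + ‖s‖ ^ 2)) := by
  have hs2 : ‖s‖ ^ 2 = s.re ^ 2 + s.im ^ 2 := by
    rw [Complex.sq_norm, Complex.normSq_apply]; ring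
  have hl2 : (0:ℝ) < 1 - l ^ 2 := by nlinarith
  have hQ : 0 < 2 * s.re * (1 + l ^ 2) + (1 - l ^ 2) * (1 + ‖s‖ ^ 2) := by
    have h1 : (0:ℝ) < 2 * s.re * (1 + l ^ 2) := by positivity
    have h2 : (0:ℝ) < (1 - l ^ 2) * (1 + ‖s‖ ^ 2) := by positivity
    linarith
  set Q : ℝ := 2 * s.re * (1 + l ^ 2) + (1 - l ^ 2) * (1 + ‖s‖ ^ 2) with hQdef
  have hD : 0 < ‖(1 - s) * A + m‖ := norm_pos_iff.mpr hden
  set w : ℂ := (((1 + l ^ 2) + s.re * (1 - l ^ 2) : ℝ) - Complex.I * (s.im * (1 - l ^ 2))) with hw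
  have hw_re : w.re = 1 + l ^ 2 + s.re * (1 - l ^ 2) := by
    simp [hw, ← Complex.ofReal_pow]
  have hw_im : w.im = -(s.im * (1 - l ^ 2)) := by
    simp [hw, ← Complex.ofReal_pow]
  rw [norm_div, div_le_iff₀ hD, le_div_iff₀ hQ]
  have habs : ‖A - (m : ℂ) * w / (Q : ℂ)‖ * Q
      = ‖(Q : ℂ) * A - (m : ℂ) * w‖ := by
    have hQc : (Q : ℂ) ≠ 0 := by exact_mod_cast hQ.ne'
    have h1 : A - (m : ℂ) * w / (Q : ℂ) = ((Q : ℂ) * A - (m : ℂ) * w) / (Q : ℂ) := by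
      field_simp
    rw [h1, norm_div, Complex.norm_real, Real.norm_eq_abs, abs_of_pos hQ, div_mul_cancel₀]
    exact hQ.ne'
  rw [habs]
  rw [← pow_le_pow_iff_left₀ (norm_nonneg _)
    (by positivity : (0:ℝ) ≤ l * ‖(1 - s) * A + m‖) two_ne_zero,
    ← pow_le_pow_iff_left₀ (norm_nonneg _) (by positivity : (0:ℝ) ≤ 2 * l * m) two_ne_zero]
  have iden : Q * ((l * ‖(1 - s) * A + m‖) ^ 2
        - ‖((1 + s) * A - m)‖ ^ 2)
      = (2 * l * m) ^ 2 - ‖(Q : ℂ) * A - (m : ℂ) * w‖ ^ 2 := by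
    rw [mul_pow, Complex.sq_norm, Complex.sq_norm, Complex.sq_norm]
    simp only [Complex.normSq_apply, Complex.mul_re, Complex.mul_im, Complex.add_re,
      Complex.add_im, Complex.sub_re, Complex.sub_im, Complex.ofReal_re, Complex.ofReal_im,
      Complex.one_re, Complex.one_im, hw_re, hw_im]
    rw [hQdef, hs2]
    ring
  constructor
  · intro h
    nlinarith [hQ, iden, norm_nonneg (((1 + s) * A - m))]
  · intro h
    nlinarith [hQ, iden, norm_nonneg ((Q : ℂ) * A - (m : ℂ) * w)]
end

section
/- Let k ∈ (0,1), s ∈ ℂ with s ≠ 1 and a := Re(s) > 0, and set l₂ := (√(4a² + k²|s̄²-1|²) - 2a) / (k|s-1|²) and l₃ := (|s-1|² + k|s̄²-1|) / (|s̄²-1| + k|s-1|²). Then l₂ ≤ l₃. -/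
lemma aux_stmt9 (k a A B C : ℝ) (hk0 : 0 < k) (hk1 : k < 1) (ha : 0 < a)
    (hA : 0 < A) (hB : 0 ≤ B) (hB2 : B ^ 2 = A * C) (hC : C = A + 4 * a) :
    (Real.sqrt (4 * a ^ 2 + k ^ 2 * B ^ 2) - 2 * a) / (k * A) ≤ (A + k * B) / (B + k * A) := by
  have hD : 0 < B + k * A := by positivity
  have h1k : 0 < 1 - k ^ 2 := by nlinarith
  have key : Real.sqrt (4 * a ^ 2 + k ^ 2 * B ^ 2)
      ≤ k * A * ((A + k * B) / (B + k * A)) + 2 * a := by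
    rw [show k * A * ((A + k * B) / (B + k * A)) + 2 * a
        = (k * A * (A + k * B) + 2 * a * (B + k * A)) / (B + k * A) by field_simp]
    have h1 : Real.sqrt (4 * a ^ 2 + k ^ 2 * B ^ 2)
        ≤ Real.sqrt (((k * A * (A + k * B) + 2 * a * (B + k * A)) / (B + k * A)) ^ 2) := by
      apply Real.sqrt_le_sqrt
      rw [div_pow, le_div_iff₀ (by positivity)]
      have hid : (k * A * (A + k * B) + 2 * a * (B + k * A)) ^ 2
          - (4 * a ^ 2 + k ^ 2 * B ^ 2) * (B + k * A) ^ 2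
          = 4 * k * (1 - k ^ 2) * a * A ^ 2 * B := by
        linear_combination (-(k ^ 2 * A ^ 2 * (1 - k ^ 2)) - k ^ 2 * (B + k * A) ^ 2) * hB2
          + (-(k ^ 2 * A ^ 2 * (1 - k ^ 2)) - k ^ 2 * (B + k * A) ^ 2) * A * hC
      nlinarith [mul_nonneg (mul_nonneg (mul_pos (mul_pos hk0 h1k) ha).le
        (sq_nonneg A)) hB, hid]
    rwa [Real.sqrt_sq (by positivity)] at h1
  rw [div_le_iff₀ (by positivity)]
  calc Real.sqrt (4 * a ^ 2 + k ^ 2 * B ^ 2) - 2 * a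
      ≤ k * A * ((A + k * B) / (B + k * A)) := by linarith
    _ = (A + k * B) / (B + k * A) * (k * A) := by ring

theorem stmt_9 (k : ℝ) (hk0 : 0 < k) (hk1 : k < 1) (s : ℂ) (hs1 : s ≠ 1) (hre : 0 < s.re) :
    (Real.sqrt (4 * s.re ^ 2 + k ^ 2 * ‖(starRingEnd ℂ s) ^ 2 - 1‖ ^ 2) - 2 * s.re) /
        (k * ‖s - 1‖ ^ 2) ≤
      (‖s - 1‖ ^ 2 + k * ‖(starRingEnd ℂ s) ^ 2 - 1‖) /
        (‖(starRingEnd ℂ s) ^ 2 - 1‖ + k * ‖s - 1‖ ^ 2) := by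
  have hBeq : ‖(starRingEnd ℂ s) ^ 2 - 1‖
      = ‖s - 1‖ * ‖s + 1‖ := by
    rw [show (starRingEnd ℂ s) ^ 2 - 1 = starRingEnd ℂ (s ^ 2 - 1) by
      rw [map_sub, map_pow, map_one]]
    rw [Complex.norm_conj, show s ^ 2 - 1 = (s - 1) * (s + 1) by ring, norm_mul]
  have hC : (‖s + 1‖) ^ 2 = (‖s - 1‖) ^ 2 + 4 * s.re := by
    simp only [Complex.sq_norm, Complex.normSq_apply, Complex.add_re, Complex.sub_re,
      Complex.add_im, Complex.sub_im, Complex.one_re, Complex.one_im]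
    ring
  have hA : 0 < ‖s - 1‖ ^ 2 := by
    have h0 : s - 1 ≠ 0 := sub_ne_zero.mpr hs1
    exact pow_pos (norm_pos_iff.mpr h0) 2
  rw [hBeq]
  exact aux_stmt9 k s.re (‖s - 1‖ ^ 2) (‖s - 1‖ * ‖s + 1‖)
    (‖s + 1‖ ^ 2) hk0 hk1 hre hA
    (mul_nonneg (norm_nonneg _) (norm_nonneg _)) (by ring) hC
end

section
/- Let α be a nonzero complex number, s = a + ib with a > 0 real and b real, m > 0, and suppose Re(m/α) > a. Define a₁(t) = e^{t(m/α - s)} · w(t)^{1/α} where w(t) = (1 + (a/c)h₀)e^{-mt} - (a/c)h₀ with c ∉ [0,∞), h₀ ∉ (-∞,0]. Then |a₁(t)| → ∞ as t → ∞. -/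
open Filter Complex Topology

theorem stmt_14 (α : ℂ) (hα : α ≠ 0) (a b m : ℝ) (ha : 0 < a) (hm : 0 < m)
    (hre : ((m : ℂ) / α).re > a) (c h₀ : ℂ)
    (hc : ∀ r : ℝ, 0 ≤ r → c ≠ (r : ℂ)) (hh₀ : ∀ r : ℝ, r ≤ 0 → h₀ ≠ (r : ℂ)) :
    Filter.Tendsto
      (fun t : ℝ =>
        norm
          (Complex.exp ((t : ℂ) * ((m : ℂ) / α - ((a : ℂ) + (b : ℂ) * Complex.I))) *
            ((1 + ((a : ℂ) / c) * h₀) * ((Real.exp (-(m * t)) : ℝ) : ℂ) - ((a : ℂ) / c) * h₀) ^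
              ((1 : ℂ) / α)))
      Filter.atTop Filter.atTop := by
  have hc0 : c ≠ 0 := by simpa using hc 0 le_rfl
  have hh0 : h₀ ≠ 0 := by simpa using hh₀ 0 le_rfl
  set d : ℂ := ((a : ℂ) / c) * h₀ with hdd
  have hdne : d ≠ 0 := by
    apply mul_ne_zero _ hh0
    exact div_ne_zero (by exact_mod_cast ha.ne') hc0
  set w : ℝ → ℂ := fun t => (1 + d) * ((Real.exp (-(m * t)) : ℝ) : ℂ) - d with hww
  -- w tends to -d
  have hw : Tendsto w atTop (𝓝 (-d)) := by
    have h1 : Tendsto (fun t : ℝ => Real.exp (-(m * t))) atTop (𝓝 0) :=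
      Real.tendsto_exp_neg_atTop_nhds_zero.comp
        (Tendsto.const_mul_atTop hm tendsto_id)
    have h2 : Tendsto (fun t : ℝ => ((Real.exp (-(m * t)) : ℝ) : ℂ)) atTop (𝓝 0) := by
      have := (Complex.continuous_ofReal.tendsto 0).comp h1
      simpa only [Function.comp_def, Complex.ofReal_zero] using this
    have h3 : Tendsto (fun t : ℝ => (1 + d) * ((Real.exp (-(m * t)) : ℝ) : ℂ) - d) atTop
        (𝓝 ((1 + d) * 0 - d)) :=
      (tendsto_const_nhds.mul h2).sub tendsto_const_nhds
    rw [hww]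
    simpa only [mul_zero, zero_sub] using h3
  have habs : Tendsto (fun t => norm (w t)) atTop (𝓝 (norm d)) := by
    simpa [Function.comp_def] using (continuous_norm.tendsto (-d)).comp hw
  have hdpos : 0 < norm d := by simpa using hdne
  -- eventual bounds on |w t|
  have hEv : ∀ᶠ t in atTop, norm (w t) ∈ Set.Ioo (norm d / 2) (norm d + 1) := by
    apply habs.eventually
    apply Ioo_mem_nhds (by linarith) (by linarith)
  -- constants
  obtain ⟨p, hp⟩ : ∃ p : ℝ, p = ((1 : ℂ) / α).re := ⟨_, rfl⟩
  obtain ⟨q, hq⟩ : ∃ q : ℝ, q = ((1 : ℂ) / α).im := ⟨_, rfl⟩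
  obtain ⟨K, hK0⟩ : ∃ K : ℝ,
      K = |Real.log (norm d / 2)| + |Real.log (norm d + 1)| := ⟨_, rfl⟩
  obtain ⟨C, hC0⟩ : ∃ C : ℝ, C = |p| * K + Real.pi * |q| := ⟨_, rfl⟩
  obtain ⟨ε, hε0⟩ : ∃ ε : ℝ, ε = Real.exp (-C) := ⟨_, rfl⟩
  have hεpos : 0 < ε := hε0 ▸ Real.exp_pos _
  -- lower bound on |w t ^ (1/α)|
  have hlow : ∀ᶠ t in atTop, ε ≤ norm ((w t) ^ ((1 : ℂ) / α)) := by
    filter_upwards [hEv] with t ht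
    have hwabs : 0 < norm (w t) := lt_of_le_of_lt (by positivity) ht.1
    have hwt0 : w t ≠ 0 := by
      intro h; rw [h] at hwabs; simp at hwabs
    rw [Complex.norm_cpow_of_ne_zero hwt0]
    rw [Real.rpow_def_of_pos hwabs, ← Real.exp_sub, hε0]
    apply Real.exp_le_exp.mpr
    have hlog1 : Real.log (norm d / 2) ≤ Real.log (norm (w t)) :=
      Real.log_le_log (by linarith) ht.1.le
    have hlog2 : Real.log (norm (w t)) ≤ Real.log (norm d + 1) :=
      Real.log_le_log hwabs ht.2.le
    have hK : |Real.log (norm (w t))| ≤ K := by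
      rw [abs_le, hK0]
      constructor
      · have := neg_abs_le (Real.log (norm d / 2))
        have h2 : (0:ℝ) ≤ |Real.log (norm d + 1)| := abs_nonneg _
        linarith
      · have := le_abs_self (Real.log (norm d + 1))
        have h2 : (0:ℝ) ≤ |Real.log (norm d / 2)| := abs_nonneg _
        linarith
    have h1 : -(|p| * K) ≤ p * Real.log (norm (w t)) := by
      have := abs_mul p (Real.log (norm (w t)))
      have h3 : |p * Real.log (norm (w t))| ≤ |p| * K := by
        rw [abs_mul]
        exact mul_le_mul_of_nonneg_left hK (abs_nonneg _)
      linarith [neg_abs_le (p * Real.log (norm (w t)))]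
    have h2 : Complex.arg (w t) * q ≤ Real.pi * |q| := by
      calc Complex.arg (w t) * q ≤ |Complex.arg (w t) * q| := le_abs_self _
        _ = |Complex.arg (w t)| * |q| := abs_mul _ _
        _ ≤ Real.pi * |q| := mul_le_mul_of_nonneg_right (Complex.abs_arg_le_pi _) (abs_nonneg _)
    rw [hC0, ← hp, ← hq]
    linarith [h1, h2, mul_comm p (Real.log (norm (w t)))]
  -- the exponential factor
  have hrepos : (0:ℝ) < ((m : ℂ) / α).re - a := by linarith
  have hexp : Tendsto (fun t : ℝ => ε * Real.exp (t * (((m : ℂ) / α).re - a))) atTop atTop := by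
    apply Tendsto.const_mul_atTop hεpos
    exact Real.tendsto_exp_atTop.comp (Tendsto.atTop_mul_const hrepos tendsto_id)
  apply tendsto_atTop_mono' _ _ hexp
  filter_upwards [hlow] with t ht
  rw [norm_mul, Complex.norm_exp]
  have hre' : ((t : ℂ) * ((m : ℂ) / α - ((a : ℂ) + (b : ℂ) * Complex.I))).re
      = t * (((m : ℂ) / α).re - a) := by
    simp [Complex.mul_re, Complex.sub_re, Complex.add_re, Complex.mul_im]
  rw [hre', mul_comm ε]
  exact mul_le_mul_of_nonneg_left ht (Real.exp_pos _).le
end
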